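/- For every natural number n, ∑_{k=0}^{n} (-1/4)^k · binom(n,k) · binom(2k,k) · O_k = -(1/4)^n · binom(2n,n) · O_n. -/

import Mathlib

/-- The `r`-th odd harmonic number `O_r = ∑_{i=1}^r 1/(2i-1)` (with `O_0 = 0`). -/
noncomputable def O (r : ℕ) : ℝ := ∑ i ∈ Finset.range r, 1 / (2 * (i : ℝ) + 1)

open Finset Polynomial Nat


lemma FH (n : ℕ) :
    (∀ m : ℕ, ∑ k ∈ range (n+1), (-1:ℝ)^k * (n.choose k) * ((m+k).choose k)
        = (-1)^n * (m.choose n)) ∧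
    (∀ m : ℕ, ∑ k ∈ range (n+1), (-1:ℝ)^k * (n.choose k) * ((m+k).choose (k+1))
        = (-1)^n * (m.choose (n+1))) := by
  induction n with
  | zero => constructor <;> intro m <;> simp
  | succ n ih =>
    obtain ⟨hF, hH⟩ := ih
    have hF' : ∀ m : ℕ, ∑ k ∈ range (n+2), (-1:ℝ)^k * ((n+1).choose k) * ((m+k).choose k)
        = (-1)^(n+1) * (m.choose (n+1)) := by
      intro m
      rw [Finset.sum_range_succ' _ (n+1)]
      have e1 : ∀ j : ℕ, (-1:ℝ)^(j+1) * ((n+1).choose (j+1)) * ((m+(j+1)).choose (j+1))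
          = -((-1)^j * (n.choose j) * ((m+j).choose j))
            - ((-1)^j * (n.choose j) * ((m+j).choose (j+1)))
            - ((-1)^j * (n.choose (j+1)) * ((m+(j+1)).choose (j+1))) := by
        intro j
        have h1 : (n+1).choose (j+1) = n.choose j + n.choose (j+1) := Nat.choose_succ_succ n j
        have h2 : (m+(j+1)).choose (j+1) = (m+j).choose j + (m+j).choose (j+1) :=
          Nat.choose_succ_succ (m+j) j
        rw [h1, h2]
        push_cast
        ring
      rw [Finset.sum_congr rfl (fun j _ => e1 j)]
      have split : ∑ j ∈ range (n+1),
          (-((-1:ℝ)^j * (n.choose j) * ((m+j).choose j))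
            - ((-1)^j * (n.choose j) * ((m+j).choose (j+1)))
            - ((-1)^j * (n.choose (j+1)) * ((m+(j+1)).choose (j+1))))
          = -(∑ j ∈ range (n+1), (-1:ℝ)^j * (n.choose j) * ((m+j).choose j))
            - (∑ j ∈ range (n+1), (-1:ℝ)^j * (n.choose j) * ((m+j).choose (j+1)))
            - (∑ j ∈ range (n+1), (-1:ℝ)^j * (n.choose (j+1)) * ((m+(j+1)).choose (j+1))) := by
        rw [← Finset.sum_neg_distrib, ← Finset.sum_sub_distrib, ← Finset.sum_sub_distrib]
      rw [split, hF m, hH m]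
      -- remaining: third sum + f 0 term
      have e3 : (∑ j ∈ range (n+1), (-1:ℝ)^j * (n.choose (j+1)) * ((m+(j+1)).choose (j+1)))
          = -(∑ j ∈ range (n+1), (-1:ℝ)^(j+1) * (n.choose (j+1)) * ((m+(j+1)).choose (j+1))) := by
        rw [← Finset.sum_neg_distrib]
        refine Finset.sum_congr rfl fun j _ => ?_
        rw [pow_succ]; ring
      rw [e3]
      have e4 : (∑ j ∈ range (n+1), (-1:ℝ)^(j+1) * (n.choose (j+1)) * ((m+(j+1)).choose (j+1)))
            + (-1:ℝ)^0 * ((n+1).choose 0) * ((m+0).choose 0)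
          = ∑ k ∈ range (n+2), (-1:ℝ)^k * (n.choose k) * ((m+k).choose k) := by
        rw [Finset.sum_range_succ' (fun k => (-1:ℝ)^k * (n.choose k) * ((m+k).choose k)) (n+1)]
        simp
      have e5 : ∑ k ∈ range (n+2), (-1:ℝ)^k * (n.choose k) * ((m+k).choose k)
          = (-1)^n * (m.choose n) := by
        rw [Finset.sum_range_succ, hF m, Nat.choose_succ_self]
        simp
      rw [e5] at e4
      linear_combination e4
    refine ⟨hF', ?_⟩
    intro m
    induction m with
    | zero => simp [Nat.choose_eq_zero_of_lt]
    | succ m ihm =>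
      have e : ∀ k : ℕ, ((m+1+k).choose (k+1) : ℝ)
          = ((m+k).choose k : ℝ) + ((m+k).choose (k+1) : ℝ) := by
        intro k
        have : (m+1+k) = (m+k)+1 := by ring
        rw [this]
        exact_mod_cast congrArg (Nat.cast (R := ℝ)) (Nat.choose_succ_succ (m+k) k)
      calc ∑ k ∈ range (n+2), (-1:ℝ)^k * ((n+1).choose k) * ((m+1+k).choose (k+1))
          = ∑ k ∈ range (n+2), ((-1:ℝ)^k * ((n+1).choose k) * ((m+k).choose k)
            + (-1:ℝ)^k * ((n+1).choose k) * ((m+k).choose (k+1))) := by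
            refine Finset.sum_congr rfl fun k _ => ?_
            rw [e k]; ring
        _ = (-1)^(n+1) * (m.choose (n+1)) + (-1)^(n+1) * (m.choose (n+2)) := by
            rw [Finset.sum_add_distrib, hF' m, ihm]
        _ = (-1)^(n+1) * ((m+1).choose (n+2)) := by
            rw [Nat.choose_succ_succ' ]
            push_cast
            ring



noncomputable def Dd (k : ℕ) : ℝ := ∏ i ∈ range k, (2*(i:ℝ)+1)

noncomputable def Ap (k : ℕ) : Polynomial ℝ := ∏ i ∈ range k, (X + C (2*(i:ℝ)+1))
noncomputable def Bp (n : ℕ) : Polynomial ℝ := ∏ i ∈ range n, (X - C (2*(i:ℝ)+1))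

lemma Dd_pos (k : ℕ) : 0 < Dd k := Finset.prod_pos (fun i _ => by positivity)

lemma evalAp (m k : ℕ) : (Ap k).eval (2*m+1 : ℝ) * (m ! : ℝ) = 2^k * ((m+k)! : ℝ) := by
  induction k with
  | zero => simp [Ap]
  | succ k ih =>
    rw [Ap, Finset.prod_range_succ, ← Ap, eval_mul]
    have : ((m+(k+1))! : ℝ) = ((m+k)! : ℝ) * ((m:ℝ)+k+1) := by
      have : m+(k+1) = (m+k)+1 := rfl
      rw [this, Nat.factorial_succ]
      push_cast; ring
    rw [this]
    simp only [eval_add, eval_X, eval_C]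
    push_cast
    linear_combination (2*(m:ℝ)+2*(k:ℝ)+2) * ih

lemma evalBp (n : ℕ) : ∀ m : ℕ, n ≤ m →
    (Bp n).eval (2*m+1 : ℝ) * ((m-n)! : ℝ) = 2^n * (m ! : ℝ) := by
  induction n with
  | zero => intro m _; simp [Bp]
  | succ n ih =>
    intro m h
    have hn : n ≤ m := Nat.le_of_succ_le h
    rw [Bp, Finset.prod_range_succ, ← Bp, eval_mul]
    simp only [eval_sub, eval_X, eval_C]
    have hs : (m - n : ℕ) = (m - (n+1)) + 1 := by omega
    have hfac : ((m-n)! : ℝ) = ((m-(n+1))! : ℝ) * ((m:ℝ) - n) := by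
      rw [hs, Nat.factorial_succ]
      push_cast [Nat.cast_sub h]
      ring
    have ihm := ih m hn
    rw [hfac] at ihm
    have : (2*(m:ℝ)+1 - (2*(n:ℝ)+1)) = 2*((m:ℝ)-n) := by ring
    rw [this]
    linear_combination 2 * ihm

lemma evalAp0 (k : ℕ) : (Ap k).eval 0 = Dd k := by
  rw [Ap, eval_prod, Dd]
  exact Finset.prod_congr rfl fun i _ => by simp

lemma Dd_succ (k : ℕ) : Dd (k+1) = Dd k * (2*(k:ℝ)+1) := Finset.prod_range_succ _ _

lemma O_succ (k : ℕ) : O (k+1) = O k + 1/(2*(k:ℝ)+1) := Finset.sum_range_succ _ _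

lemma evalBp0 (n : ℕ) : (Bp n).eval 0 = (-1)^n * Dd n := by
  rw [Bp, eval_prod]
  calc ∏ j ∈ range n, (X - C (2*(j:ℝ)+1)).eval 0 = ∏ j ∈ range n, (-1) * (2*(j:ℝ)+1) := by
        refine Finset.prod_congr rfl fun i _ => by rw [eval_sub, eval_X, eval_C]; ring
    _ = (-1)^n * Dd n := by
        rw [Finset.prod_mul_distrib, Finset.prod_const, Finset.card_range, Dd]

lemma dAp0 (k : ℕ) : (derivative (Ap k)).eval 0 = Dd k * O k := by
  induction k with
  | zero => simp [Ap, O, Dd]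
  | succ k ih =>
    rw [Ap, Finset.prod_range_succ, ← Ap, derivative_mul]
    simp only [derivative_add, derivative_X, derivative_C, add_zero, eval_add, eval_mul,
      eval_X, eval_C, mul_one, eval_one, zero_add]
    rw [ih, evalAp0, Dd_succ, O_succ]
    have h : (2*(k:ℝ)+1) ≠ 0 := by positivity
    field_simp

lemma dBp0 (n : ℕ) : (derivative (Bp n)).eval 0 = -((-1)^n * Dd n * O n) := by
  induction n with
  | zero => simp [Bp, O, Dd]
  | succ n ih =>
    rw [Bp, Finset.prod_range_succ, ← Bp, derivative_mul]
    simp only [derivative_sub, derivative_X, derivative_C, sub_zero, eval_add, eval_mul,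
      eval_sub, eval_X, eval_C, mul_one, eval_one, zero_sub]
    rw [ih, evalBp0, Dd_succ, O_succ]
    have h : (2*(n:ℝ)+1) ≠ 0 := by positivity
    field_simp
    ring


noncomputable def Lp (n : ℕ) : Polynomial ℝ :=
  ∑ k ∈ range (n+1), C ((-1:ℝ)^k * ((n.choose k : ℝ))^2 * ((n-k)! : ℝ) * 2^(n-k)) * Ap k

lemma term_eval (n k m : ℕ) (hk : k ≤ n) :
    ((-1:ℝ)^k * ((n.choose k : ℝ))^2 * ((n-k)! : ℝ) * 2^(n-k)) * (Ap k).eval (2*m+1 : ℝ)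
    = 2^n * (n ! : ℝ) * ((-1:ℝ)^k * (n.choose k) * ((m+k).choose k)) := by
  have hm : (m ! : ℝ) ≠ 0 := by positivity
  have hA := evalAp m k
  have h1 : ((n.choose k : ℝ)) * (k ! : ℝ) * ((n-k)! : ℝ) = (n ! : ℝ) := by
    exact_mod_cast congrArg (Nat.cast (R := ℝ)) (Nat.choose_mul_factorial_mul_factorial hk)
  have h2 : (((m+k).choose k : ℝ)) * (k ! : ℝ) * (m ! : ℝ) = ((m+k)! : ℝ) := by
    have := Nat.choose_mul_factorial_mul_factorial (Nat.le_add_left k m)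
    rw [Nat.add_sub_cancel] at this
    exact_mod_cast congrArg (Nat.cast (R := ℝ)) this
  have hk2 : (k ! : ℝ) ≠ 0 := by positivity
  have hpow : (2:ℝ)^(n-k) * 2^k = 2^n := by
    rw [← pow_add, Nat.sub_add_cancel hk]
  -- multiply both sides by m! * k!
  apply mul_right_cancel₀ hm
  apply mul_right_cancel₀ hk2
  linear_combination
    ((-1:ℝ)^k * ((n.choose k : ℝ))^2 * ((n-k)! : ℝ) * 2^(n-k) * (k ! : ℝ)) * hA
    + ((-1:ℝ)^k * ((n.choose k : ℝ))^2 * ((n-k)! : ℝ) * (k ! : ℝ) * (((m+k)! : ℝ))) * hpow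
    - ((-1:ℝ)^k * ((n.choose k : ℝ))^2 * ((n-k)! : ℝ) * (k ! : ℝ) * 2^n) * h2
    + ((-1:ℝ)^k * ((n.choose k : ℝ)) * 2^n * (((m+k).choose k : ℝ)) * (m ! : ℝ) * (k ! : ℝ)) * h1

lemma eval_Lp (n m : ℕ) (h : n ≤ m) :
    (Lp n).eval (2*m+1 : ℝ) = (C ((-1:ℝ)^n) * Bp n).eval (2*m+1 : ℝ) := by
  rw [Lp, eval_finset_sum]
  have : ∑ k ∈ range (n+1),
      (C ((-1:ℝ)^k * ((n.choose k : ℝ))^2 * ((n-k)! : ℝ) * 2^(n-k)) * Ap k).eval (2*m+1 : ℝ)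
      = ∑ k ∈ range (n+1), 2^n * (n ! : ℝ) * ((-1:ℝ)^k * (n.choose k) * ((m+k).choose k)) := by
    refine Finset.sum_congr rfl fun k hkmem => ?_
    rw [eval_mul, eval_C]
    exact term_eval n k m (Nat.lt_succ_iff.mp (Finset.mem_range.mp hkmem))
  rw [this, ← Finset.mul_sum, (FH n).1 m, eval_mul, eval_C]
  have hB := evalBp n m h
  have hmn : ((m-n)! : ℝ) ≠ 0 := by positivity
  have hc : (m.choose n : ℝ) = (m ! : ℝ) / ((n ! : ℝ) * ((m-n)! : ℝ)) := Nat.cast_choose ℝ h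
  rw [hc]
  have hn : (n ! : ℝ) ≠ 0 := by positivity
  field_simp
  linear_combination (-1:ℝ) * hB

lemma poly_eq (n : ℕ) : Lp n = C ((-1:ℝ)^n) * Bp n := by
  apply Polynomial.eq_of_infinite_eval_eq
  apply Set.infinite_of_injective_forall_mem (f := fun m : ℕ => 2*((m:ℝ)+n)+1)
  · intro a b hab
    simp only at hab
    have : (a:ℝ) = b := by linarith
    exact_mod_cast this
  · intro m
    have := eval_Lp n (m+n) (Nat.le_add_left n m)
    simp only [Set.mem_setOf_eq]
    push_cast at this ⊢
    convert this using 2 <;> ring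

lemma key (n : ℕ) :
    ∑ k ∈ range (n+1), ((-1:ℝ)^k * ((n.choose k : ℝ))^2 * ((n-k)! : ℝ) * 2^(n-k)) * (Dd k * O k)
    = -(Dd n * O n) := by
  have h := congrArg (fun p => (derivative p).eval 0) (poly_eq n)
  rw [derivative_mul, derivative_C, zero_mul, zero_add, eval_mul, eval_C, dBp0] at h
  rw [Lp, map_sum] at h
  simp only [derivative_C_mul, eval_finset_sum, eval_mul, eval_C, dAp0] at h
  rw [h]
  have : ((-1:ℝ)^n * (-1)^n) = 1 := by
    rw [← pow_add, ← two_mul, pow_mul]; norm_num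
  linear_combination (-(Dd n * O n)) * this


lemma doubleFac (k : ℕ) : ((2*k)! : ℝ) = 2^k * (k ! : ℝ) * Dd k := by
  induction k with
  | zero => simp [Dd]
  | succ k ih =>
    have h : 2*(k+1) = (2*k+1)+1 := by omega
    rw [h, Nat.factorial_succ, Nat.factorial_succ]
    push_cast
    rw [ih, Dd_succ, Nat.factorial_succ]
    push_cast
    ring

lemma chooseC (k : ℕ) : ((2*k).choose k : ℝ) * (k ! : ℝ) = 2^k * Dd k := by
  have h := Nat.choose_mul_factorial_mul_factorial (show k ≤ 2*k by omega)
  have h2 : 2*k - k = k := by omega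
  rw [h2] at h
  have hcast : ((2*k).choose k : ℝ) * (k !) * (k !) = ((2*k)! : ℝ) := by
    exact_mod_cast congrArg (Nat.cast (R := ℝ)) h
  have hk : (k ! : ℝ) ≠ 0 := by positivity
  apply mul_right_cancel₀ hk
  linear_combination hcast + doubleFac k


/-- The paper's Theorem in Section 4: a Fourier–Legendre-based analogue of Knuth's old sum. -/
theorem stmt_9 (n : ℕ) :
    ∑ k ∈ Finset.range (n + 1),
      (-(1/4) : ℝ) ^ k * (n.choose k : ℝ) * ((2 * k).choose k : ℝ) * O k
    = -(1/4 : ℝ) ^ n * ((2 * n).choose n : ℝ) * O n := by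
  have hnz : (2:ℝ)^n * (n ! : ℝ) ≠ 0 := by positivity
  apply mul_left_cancel₀ hnz
  rw [Finset.mul_sum]
  have hrhs : ((2:ℝ)^n * (n ! : ℝ)) * (-(1/4 : ℝ) ^ n * ((2 * n).choose n : ℝ) * O n)
      = -(Dd n * O n) := by
    have hC2 : ((2*n).choose n : ℝ) = 2^n * Dd n / (n !) := by
      rw [eq_div_iff (show (n ! : ℝ) ≠ 0 by positivity)]; exact chooseC n
    have hq : ((1:ℝ)/4)^n = 1 / (2^n * 2^n) := by
      rw [eq_div_iff (by positivity), ← mul_pow, ← mul_pow]; norm_num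
    rw [hC2, hq]
    field_simp
  rw [hrhs, ← key n]
  refine Finset.sum_congr rfl fun k hkmem => ?_
  have hk : k ≤ n := Nat.lt_succ_iff.mp (Finset.mem_range.mp hkmem)
  have hKne : (k ! : ℝ) ≠ 0 := by positivity
  have h2k : (2:ℝ)^k ≠ 0 := by positivity
  have hP : (2:ℝ)^(n-k) = 2^n / 2^k := by
    rw [eq_div_iff h2k, ← pow_add, Nat.sub_add_cancel hk]
  have hC2 : ((2*k).choose k : ℝ) = 2^k * Dd k / (k !) := by
    rw [eq_div_iff hKne]; exact chooseC k
  have hq : (-(1/4) : ℝ)^k = (-1)^k / (2^k * 2^k) := by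
    rw [eq_div_iff (by positivity), ← mul_pow, ← mul_pow]; norm_num
  have hN : (n ! : ℝ) = (n.choose k : ℝ) * (k ! : ℝ) * ((n-k)! : ℝ) := by
    exact_mod_cast (congrArg (Nat.cast (R := ℝ)) (Nat.choose_mul_factorial_mul_factorial hk)).symm
  rw [hq, hC2, hP, hN]
  field_simp
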